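/- Fundamental Lemma (rank form): If the system x_{k+1}=Ax_k+Bu_k is controllable and the input sequence u_0,...,u_{T-1} is persistently exciting of order L+n, then the matrix col(X, H_L(u)), where X = [x_0, ..., x_{T-L}] collects the states along the trajectory, has full row rank n + mL; consequently the range of col(H_L(u), H_L(y)) equals the set of all L-long input-output trajectories of the system. -/

import Mathlib

set_option maxHeartbeats 1000000

open Matrix

variable {ι κ : Type*} [Fintype ι] [Fintype κ] [DecidableEq ι] [DecidableEq κ]

lemma rank_eq_card_of_ker (M : Matrix ι κ ℝ)
    (h : ∀ v : ι → ℝ, v ᵥ* M = 0 → v = 0) : M.rank = Fintype.card ι := by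
  rw [← Matrix.rank_transpose, Matrix.rank]
  have hinj : Function.Injective (Mᵀ.mulVecLin) := by
    rw [← LinearMap.ker_eq_bot, LinearMap.ker_eq_bot']
    intro v hv
    exact h v (by rwa [Matrix.mulVecLin_apply, Matrix.mulVec_transpose] at hv)
  rw [LinearMap.finrank_range_of_inj hinj, Module.finrank_pi]

lemma vecMul_eq_zero_of_rank (M : Matrix ι κ ℝ) (h : M.rank = Fintype.card ι)
    (v : ι → ℝ) (hv : v ᵥ* M = 0) : v = 0 := by
  have hr : Module.finrank ℝ (LinearMap.range Mᵀ.mulVecLin) = Fintype.card ι := by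
    rw [← Matrix.rank, Matrix.rank_transpose, h]
  have hrn := LinearMap.finrank_range_add_finrank_ker (Mᵀ.mulVecLin)
  rw [hr, Module.finrank_pi] at hrn
  have hker : Module.finrank ℝ (LinearMap.ker Mᵀ.mulVecLin) = 0 := by omega
  have hbot : LinearMap.ker Mᵀ.mulVecLin = ⊥ := Submodule.finrank_eq_zero.mp hker
  have : v ∈ LinearMap.ker Mᵀ.mulVecLin := by
    simp [LinearMap.mem_ker, Matrix.mulVecLin_apply, Matrix.mulVec_transpose, hv]
  rw [hbot, Submodule.mem_bot] at this
  exact this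

lemma exists_mulVec_eq_of_rank (M : Matrix ι κ ℝ) (h : M.rank = Fintype.card ι)
    (b : ι → ℝ) : ∃ g : κ → ℝ, M *ᵥ g = b := by
  have : LinearMap.range M.mulVecLin = ⊤ := by
    apply Submodule.eq_top_of_finrank_eq
    rw [← Matrix.rank, h, Module.finrank_pi]
  obtain ⟨g, hg⟩ := (LinearMap.range_eq_top.mp this) b
  exact ⟨g, by rwa [Matrix.mulVecLin_apply] at hg⟩

lemma mulVec_sum' {ι κ α : Type*} [Fintype κ] {R : Type*} [CommRing R]
    (M : Matrix ι κ R) (r : Finset α) (f : α → κ → R) :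
    M *ᵥ (∑ t ∈ r, f t) = ∑ t ∈ r, M *ᵥ f t := by
  simp only [← Matrix.mulVecLin_apply]
  exact map_sum _ _ _

lemma state_formula {n m : ℕ} (A : Matrix (Fin n) (Fin n) ℝ) (B : Matrix (Fin n) (Fin m) ℝ)
    (x : ℕ → Fin n → ℝ) (u : ℕ → Fin m → ℝ)
    (hx : ∀ k, x (k + 1) = A *ᵥ x k + B *ᵥ u k) (j s : ℕ) :
    x (j + s) = (A ^ s) *ᵥ x j
      + ∑ t ∈ Finset.range s, (A ^ (s - 1 - t) * B) *ᵥ u (j + t) := by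
  induction s with
  | zero => simp [Matrix.one_mulVec]
  | succ s ih =>
      have h1 : j + (s + 1) = (j + s) + 1 := by omega
      rw [h1, hx, ih, Finset.sum_range_succ]
      rw [Matrix.mulVec_add, mulVec_sum']
      simp only [Matrix.mulVec_mulVec]
      have h2 : A * A ^ s = A ^ (s + 1) := by rw [pow_succ' A s]
      have h3 : ∀ t ∈ Finset.range s, (A * (A ^ (s - 1 - t) * B)) *ᵥ u (j + t)
          = (A ^ (s + 1 - 1 - t) * B) *ᵥ u (j + t) := by
        intro t ht
        have : A * (A ^ (s - 1 - t) * B) = A ^ (s + 1 - 1 - t) * B := by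
          rw [← Matrix.mul_assoc, ← pow_succ' A]
          have he : s - 1 - t + 1 = s + 1 - 1 - t := by
            have := Finset.mem_range.mp ht
            omega
          rw [he]
        rw [this]
      rw [Finset.sum_congr rfl h3, h2]
      have h4 : A ^ (s + 1 - 1 - s) * B = B := by
        simp
      rw [h4]
      abel


/-- Block-Hankel matrix of depth `L` built from `w_0, …, w_{T-1} ∈ ℝ^q`. -/
def blockHankel (q T L : ℕ) (w : ℕ → Fin q → ℝ) :
    Matrix (Fin L × Fin q) (Fin (T - L + 1)) ℝ :=
  fun r j => w (r.1.1 + j.1) r.2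

lemma vecMul_col_eq {n m K c : ℕ} (x : ℕ → Fin n → ℝ) (u : ℕ → Fin m → ℝ)
    (w : (Fin n ⊕ Fin K × Fin m) → ℝ) (j : Fin c) :
    (w ᵥ* (Matrix.of (fun (r : Fin n ⊕ Fin K × Fin m) (jj : Fin c) =>
        Sum.elim (fun s => x jj.1 s) (fun tm => u (tm.1.1 + jj.1) tm.2) r))) j
      = (fun s => w (Sum.inl s)) ⬝ᵥ x j.1
        + ∑ t ∈ Finset.range K,
            (fun a => if h : t < K then w (Sum.inr (⟨t, h⟩, a)) else 0) ⬝ᵥ u (t + j.1) := by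
  classical
  show (w ⬝ᵥ fun r => _) = _
  rw [dotProduct, Fintype.sum_sum_type]
  congr 1
  rw [Fintype.sum_prod_type]
  rw [← Fin.sum_univ_eq_sum_range
    (fun t => (fun a => if h : t < K then w (Sum.inr (⟨t, h⟩, a)) else 0) ⬝ᵥ u (t + j.1)) K]
  apply Finset.sum_congr rfl
  intro i _
  rw [dotProduct]
  apply Finset.sum_congr rfl
  intro a _
  simp [i.isLt]

lemma dotProduct_sum' {ι α : Type*} [Fintype ι] (v : ι → ℝ) (r : Finset α) (f : α → ι → ℝ) :
    v ⬝ᵥ (∑ t ∈ r, f t) = ∑ t ∈ r, v ⬝ᵥ f t := by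
  simp only [dotProduct, Finset.sum_apply, Finset.mul_sum]
  exact Finset.sum_comm

lemma vecMul_blockHankel_col (q T K : ℕ) (u : ℕ → Fin q → ℝ)
    (wr : Fin K × Fin q → ℝ) (j : Fin (T - K + 1)) :
    (wr ᵥ* blockHankel q T K u) j
      = ∑ t ∈ Finset.range K,
          (fun a => if h : t < K then wr (⟨t, h⟩, a) else 0) ⬝ᵥ u (t + j.1) := by
  classical
  show (wr ⬝ᵥ fun r => _) = _
  rw [dotProduct, Fintype.sum_prod_type]
  rw [← Fin.sum_univ_eq_sum_range
    (fun t => (fun a => if h : t < K then wr (⟨t, h⟩, a) else 0) ⬝ᵥ u (t + j.1)) K]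
  apply Finset.sum_congr rfl
  intro i _
  rw [dotProduct]
  apply Finset.sum_congr rfl
  intro a _
  rw [dif_pos i.isLt]
  rfl

lemma kernel_trivial (n m T L : ℕ) (hL : 1 ≤ L) (hT : L + n ≤ T)
    (A : Matrix (Fin n) (Fin n) ℝ) (B : Matrix (Fin n) (Fin m) ℝ)
    (hctrb : (Matrix.of (fun (i : Fin n) (jc : Fin n × Fin m) =>
        (A ^ (jc.1 : ℕ) * B) i jc.2)).rank = n)
    (x : ℕ → Fin n → ℝ) (u : ℕ → Fin m → ℝ)
    (hx : ∀ k, x (k + 1) = A *ᵥ x k + B *ᵥ u k)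
    (hPE : (blockHankel m T (L + n) u).rank = m * (L + n))
    (v : (Fin n ⊕ Fin L × Fin m) → ℝ)
    (hv : v ᵥ* (Matrix.of (fun (r : Fin n ⊕ Fin L × Fin m) (j : Fin (T - L + 1)) =>
        Sum.elim (fun s => x j.1 s) (fun km => u (km.1.1 + j.1) km.2) r)) = 0) :
    v = 0 := by
  classical
  set xi : Fin n → ℝ := fun s => v (Sum.inl s) with hxi
  set eta : ℕ → Fin m → ℝ :=
    fun i a => if h : i < L then v (Sum.inr (⟨i, h⟩, a)) else 0 with heta
  have hcolN : ∀ j : ℕ, j ≤ T - L →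
      xi ⬝ᵥ x j + ∑ t ∈ Finset.range L, eta t ⬝ᵥ u (t + j) = 0 := by
    intro j hj
    have hvj := congrFun hv ⟨j, by omega⟩
    rw [vecMul_col_eq] at hvj
    exact hvj
  set coef : ℕ → ℕ → Fin m → ℝ :=
    fun s t => if t < s then xi ᵥ* (A ^ (s - 1 - t) * B) else eta (t - s) with hcoef
  have hrel : ∀ s, s ≤ n → ∀ j : ℕ, j ≤ T - (L + n) →
      (xi ᵥ* A ^ s) ⬝ᵥ x j + ∑ t ∈ Finset.range (L + n), coef s t ⬝ᵥ u (t + j) = 0 := by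
    intro s hs j hj
    have hjs : j + s ≤ T - L := by omega
    have h0 := hcolN (j + s) hjs
    rw [state_formula A B x u hx j s, dotProduct_add, dotProduct_sum'] at h0
    simp only [Matrix.dotProduct_mulVec] at h0
    have e1 : ∑ t ∈ Finset.range (L + n), coef s t ⬝ᵥ u (t + j)
        = (∑ t ∈ Finset.range s, (xi ᵥ* (A ^ (s - 1 - t) * B)) ⬝ᵥ u (j + t))
          + ∑ t ∈ Finset.range L, eta t ⬝ᵥ u (t + (j + s)) := by
      rw [Finset.range_eq_Ico,
        ← Finset.sum_Ico_consecutive _ (Nat.zero_le s) (by omega : s ≤ L + n)]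
      congr 1
      · rw [← Finset.range_eq_Ico]
        apply Finset.sum_congr rfl
        intro t ht
        have htl := Finset.mem_range.mp ht
        simp only [hcoef]
        rw [if_pos htl, Nat.add_comm t j]
      · rw [Finset.sum_Ico_eq_sum_range]
        have e2 : ∀ i ∈ Finset.range (L + n - s), coef s (s + i) ⬝ᵥ u (s + i + j)
            = eta i ⬝ᵥ u (s + i + j) := by
          intro i _
          simp only [hcoef]
          rw [if_neg (by omega), Nat.add_sub_cancel_left]
        rw [Finset.sum_congr rfl e2]
        have hsub : Finset.range L ⊆ Finset.range (L + n - s) := by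
          intro z hz
          simp only [Finset.mem_range] at *
          omega
        have hzero : ∀ t ∈ Finset.range (L + n - s), t ∉ Finset.range L →
            eta t ⬝ᵥ u (s + t + j) = 0 := by
          intro t _ ht
          have htL : ¬ t < L := by simpa using ht
          have he : eta t = 0 := by
            funext a
            simp only [heta]
            rw [dif_neg htL]
            rfl
          rw [he, zero_dotProduct]
        rw [← Finset.sum_subset hsub hzero]
        apply Finset.sum_congr rfl
        intro t _
        have harg : s + t + j = t + (j + s) := by omega
        rw [harg]
    rw [e1, ← add_assoc]
    exact h0
  set M2 : Matrix (Fin n ⊕ Fin (L + n) × Fin m) (Fin (T - (L + n) + 1)) ℝ :=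
    Matrix.of (fun r jj => Sum.elim (fun s => x jj.1 s) (fun tm => u (tm.1.1 + jj.1) tm.2) r)
    with hM2
  set zeta : ℕ → (Fin n ⊕ Fin (L + n) × Fin m) → ℝ :=
    fun s => Sum.elim (fun i => (xi ᵥ* A ^ s) i) (fun tm => coef s tm.1.1 tm.2) with hzeta
  have hzker : ∀ s : ℕ, s ≤ n → zeta s ᵥ* M2 = 0 := by
    intro s hs
    funext j
    have hj : (j : ℕ) ≤ T - (L + n) := by omega
    have h1 := hrel s hs j hj
    rw [hM2, vecMul_col_eq]
    have e3 : ∀ t ∈ Finset.range (L + n),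
        (fun a => if h : t < L + n then zeta s (Sum.inr (⟨t, h⟩, a)) else 0) ⬝ᵥ u (t + ↑j)
          = coef s t ⬝ᵥ u (t + ↑j) := by
      intro t ht
      have htl := Finset.mem_range.mp ht
      congr 1
      funext a
      rw [dif_pos htl]
      rfl
    rw [Finset.sum_congr rfl e3]
    exact h1
  have hinr_zero : ∀ w : (Fin n ⊕ Fin (L + n) × Fin m) → ℝ,
      w ᵥ* M2 = 0 → (∀ i, w (Sum.inl i) = 0) → w = 0 := by
    intro w hw hinl
    have hwh : (fun tm : Fin (L + n) × Fin m => w (Sum.inr tm))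
        ᵥ* blockHankel m T (L + n) u = 0 := by
      funext j
      have h1 := congrFun hw j
      rw [hM2, vecMul_col_eq] at h1
      have h2 : (fun s => w (Sum.inl s)) = (0 : Fin n → ℝ) := funext hinl
      rw [h2, zero_dotProduct, zero_add] at h1
      rw [vecMul_blockHankel_col]
      exact h1
    have h3 := vecMul_eq_zero_of_rank _
      (by simpa [mul_comm] using hPE) _ hwh
    funext r
    cases r with
    | inl i => exact hinl i
    | inr tm => exact congrFun h3 tm
  have hKfin : Module.finrank ℝ (LinearMap.ker (M2.vecMulLinear)) ≤ n := by
    have hinj : Function.Injective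
        ((LinearMap.funLeft ℝ ℝ (Sum.inl : Fin n → Fin n ⊕ Fin (L + n) × Fin m)).comp
          (LinearMap.ker M2.vecMulLinear).subtype) := by
      rw [← LinearMap.ker_eq_bot, LinearMap.ker_eq_bot']
      intro z hz
      have hzk : (z : (Fin n ⊕ Fin (L + n) × Fin m) → ℝ) ᵥ* M2 = 0 := by
        have h1 := z.2
        rwa [LinearMap.mem_ker, Matrix.vecMulLinear_apply] at h1
      have hzl : ∀ i, (z : (Fin n ⊕ Fin (L + n) × Fin m) → ℝ) (Sum.inl i) = 0 :=
        fun i => congrFun hz i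
      exact Subtype.ext (hinr_zero _ hzk hzl)
    have h4 := LinearMap.finrank_le_finrank_of_injective hinj
    simpa [Module.finrank_pi] using h4
  have hdep : ∃ cvec : Fin (n + 1) → ℝ,
      (∑ s : Fin (n + 1), cvec s • zeta ↑s) = 0 ∧ ∃ s, cvec s ≠ 0 := by
    have hmem : ∀ s : Fin (n + 1), zeta ↑s ∈ LinearMap.ker M2.vecMulLinear := by
      intro s
      rw [LinearMap.mem_ker, Matrix.vecMulLinear_apply]
      exact hzker ↑s (Nat.lt_succ_iff.mp s.isLt)
    set fam : Fin (n + 1) → LinearMap.ker M2.vecMulLinear :=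
      fun s => ⟨zeta ↑s, hmem s⟩ with hfam
    have hnli : ¬ LinearIndependent ℝ fam := by
      intro hli
      have h5 := hli.fintype_card_le_finrank
      rw [Fintype.card_fin] at h5
      omega
    obtain ⟨g, hg, i, hi⟩ := Fintype.not_linearIndependent_iff.mp hnli
    refine ⟨g, ?_, i, hi⟩
    have h6 := congrArg (Subtype.val) hg
    simpa [hfam] using h6
  obtain ⟨cvec, hcsum, hcne⟩ := hdep
  set S : Finset (Fin (n + 1)) := Finset.univ.filter (fun s => cvec s ≠ 0) with hS
  have hSne : S.Nonempty := by
    obtain ⟨i, hi⟩ := hcne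
    exact ⟨i, by simp [hS, hi]⟩
  set sstar := S.max' hSne with hsstar
  have hcstar : cvec sstar ≠ 0 := by
    have h3 : sstar ∈ S := S.max'_mem hSne
    simp only [hS, Finset.mem_filter] at h3
    exact h3.2
  have hczero : ∀ s : Fin (n + 1), sstar < s → cvec s = 0 := by
    intro s hs
    by_contra h
    exact absurd (S.le_max' s (by simp [hS, h])) (not_le.mpr hs)
  have hcpt : ∀ r, ∑ s : Fin (n + 1), cvec s * zeta ↑s r = 0 := by
    intro r
    have h1 := congrFun hcsum r
    simpa using h1
  have heta0N : ∀ k, ∀ d, L ≤ d + k → eta d = 0 := by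
    intro k
    induction k with
    | zero =>
        intro dd hdd
        funext a
        simp only [heta]
        rw [dif_neg (by omega)]
        rfl
    | succ k IH =>
        intro dd hdd
        by_cases hdL : dd < L
        · funext a
          have hsn : (↑sstar : ℕ) < n + 1 := sstar.isLt
          have hpos : ↑sstar + dd < L + n := by omega
          have h21 := hcpt (Sum.inr ((⟨↑sstar + dd, hpos⟩ : Fin (L + n)), a))
          have h22 : ∀ s : Fin (n + 1), s ∈ Finset.univ → s ≠ sstar →
              cvec s * zeta ↑s (Sum.inr ((⟨↑sstar + dd, hpos⟩ : Fin (L + n)), a)) = 0 := by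
            intro s _ hsne
            rcases lt_or_gt_of_ne hsne with hlt | hgt
            · have hsv : (↑s : ℕ) < ↑sstar := hlt
              have h23 : zeta ↑s (Sum.inr ((⟨↑sstar + dd, hpos⟩ : Fin (L + n)), a))
                  = coef ↑s (↑sstar + dd) a := rfl
              rw [h23]
              simp only [hcoef]
              rw [if_neg (by omega)]
              have he0 : eta (↑sstar + dd - ↑s) = 0 := IH _ (by omega)
              rw [he0]
              simp
            · rw [hczero s hgt, zero_mul]
          rw [Finset.sum_eq_single sstar h22
            (fun h => absurd (Finset.mem_univ _) h)] at h21
          have h25 : zeta ↑sstar (Sum.inr ((⟨↑sstar + dd, hpos⟩ : Fin (L + n)), a))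
              = eta dd a := by
            have h26 : zeta ↑sstar (Sum.inr ((⟨↑sstar + dd, hpos⟩ : Fin (L + n)), a))
                = coef ↑sstar (↑sstar + dd) a := rfl
            rw [h26]
            simp only [hcoef]
            rw [if_neg (by omega)]
            have he : ↑sstar + dd - ↑sstar = dd := by omega
            rw [he]
          rw [h25] at h21
          rcases mul_eq_zero.mp h21 with h | h
          · exact absurd h hcstar
          · exact h
        · funext a
          simp only [heta]
          rw [dif_neg hdL]
          rfl
  have heta0 : ∀ d, eta d = 0 := fun d => heta0N L d (by omega)
  -- Step E
  set w : ℕ → (Fin n → ℝ) := fun s => xi ᵥ* A ^ s with hwdef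
  have hPsstar : w ↑sstar ∈ Submodule.span ℝ (Set.range (fun t : Fin ↑sstar => w ↑t)) := by
    have hsum : ∑ s : Fin (n + 1), cvec s • w ↑s = 0 := by
      funext i
      have h7 := hcpt (Sum.inl i)
      simp only [Finset.sum_apply, Pi.smul_apply, smul_eq_mul, Pi.zero_apply]
      exact h7
    have h7 := Finset.add_sum_erase Finset.univ (fun s => cvec s • w ↑s) (Finset.mem_univ sstar)
    rw [hsum] at h7
    have hsplit : cvec sstar • w ↑sstar
        = - ∑ s ∈ Finset.univ.erase sstar, cvec s • w ↑s :=
      eq_neg_of_add_eq_zero_left h7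
    have h8 : w ↑sstar = (cvec sstar)⁻¹ • (cvec sstar • w ↑sstar) := by
      rw [smul_smul, inv_mul_cancel₀ hcstar, one_smul]
    rw [h8, hsplit]
    refine Submodule.smul_mem _ _ (Submodule.neg_mem _ (Submodule.sum_mem _ ?_))
    intro s hs
    rcases lt_trichotomy s sstar with hlt | heq | hgt
    · exact Submodule.smul_mem _ _ (Submodule.subset_span ⟨⟨↑s, hlt⟩, rfl⟩)
    · exact absurd heq (Finset.ne_of_mem_erase hs)
    · rw [hczero s hgt, zero_smul]
      exact Submodule.zero_mem _
  have hPex : ∃ dd, w dd ∈ Submodule.span ℝ (Set.range (fun t : Fin dd => w ↑t)) :=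
    ⟨↑sstar, hPsstar⟩
  set d := Nat.find hPex with hddef
  have hdP : w d ∈ Submodule.span ℝ (Set.range (fun t : Fin d => w ↑t)) := Nat.find_spec hPex
  have hdn : d ≤ n := le_trans (Nat.find_min' hPex hPsstar) (by omega)
  obtain ⟨cc, hcc⟩ := (Submodule.mem_span_range_iff_exists_fun ℝ).mp hdP
  set delta : (Fin n ⊕ Fin (L + n) × Fin m) → ℝ :=
    (zeta d) - ∑ t : Fin d, cc t • zeta ↑t with hdelta
  have hdzero : delta = 0 := by
    apply hinr_zero delta
    · have h9 : M2.vecMulLinear delta = 0 := by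
        rw [hdelta, map_sub, map_sum]
        simp only [_root_.map_smul, Matrix.vecMulLinear_apply]
        rw [hzker d hdn]
        have h10 : ∀ t : Fin d, zeta ↑t ᵥ* M2 = 0 :=
          fun t => hzker ↑t (le_trans (le_of_lt t.isLt) hdn)
        have h10' : ∀ t : Fin d, cc t • (zeta ↑t ᵥ* M2) = (0 : Fin (T - (L + n) + 1) → ℝ) := by
          intro t
          rw [h10 t, smul_zero]
        calc (0 : Fin (T - (L + n) + 1) → ℝ) - ∑ t : Fin d, cc t • (zeta ↑t ᵥ* M2)
            = 0 - ∑ t : Fin d, (0 : Fin (T - (L + n) + 1) → ℝ) := by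
              rw [Finset.sum_congr rfl (fun t _ => h10' t)]
          _ = 0 := by simp
      rwa [Matrix.vecMulLinear_apply] at h9
    · intro i
      have h11 := congrFun hcc i
      simp only [Finset.sum_apply, Pi.smul_apply, smul_eq_mul] at h11
      rw [hdelta]
      simp only [Pi.sub_apply, Finset.sum_apply, Pi.smul_apply, smul_eq_mul]
      rw [sub_eq_zero]
      have h12 : ∀ s : ℕ, zeta s (Sum.inl i) = w s i := fun s => rfl
      rw [h12]
      rw [Finset.sum_congr rfl (fun t _ => by rw [h12])]
      exact h11.symm
  have hBz : ∀ k, k < d → xi ᵥ* (A ^ k * B) = 0 := by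
    intro k
    induction k using Nat.strong_induction_on with
    | _ k IH =>
      intro hk
      funext a
      have hpos : d - 1 - k < L + n := by omega
      have h13 := congrFun hdzero (Sum.inr ((⟨d - 1 - k, hpos⟩ : Fin (L + n)), a))
      rw [hdelta] at h13
      simp only [Pi.sub_apply, Finset.sum_apply, Pi.smul_apply, smul_eq_mul,
        Pi.zero_apply] at h13
      have h14 : ∀ s : ℕ, zeta s (Sum.inr ((⟨d - 1 - k, hpos⟩ : Fin (L + n)), a))
          = coef s (d - 1 - k) a := fun s => rfl
      rw [h14] at h13
      rw [Finset.sum_congr rfl (fun t _ => by rw [h14])] at h13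
      have h15 : ∀ t' : Fin d, cc t' * coef ↑t' (d - 1 - k) a = 0 := by
        intro t'
        by_cases hc : d - 1 - k < (↑t' : ℕ)
        · have ht' := t'.isLt
          simp only [hcoef]
          rw [if_pos hc]
          have he : (↑t' : ℕ) - 1 - (d - 1 - k) < k := by omega
          have he2 : (↑t' : ℕ) - 1 - (d - 1 - k) < d := by omega
          rw [congrFun (IH _ he he2) a]
          simp
        · simp only [hcoef]
          rw [if_neg hc]
          rw [congrFun (heta0 _) a]
          simp
      rw [Finset.sum_congr rfl (fun t _ => h15 t)] at h13
      simp only [Finset.sum_const_zero, sub_zero] at h13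
      have h16 : coef d (d - 1 - k) a = (xi ᵥ* (A ^ k * B)) a := by
        simp only [hcoef]
        rw [if_pos (by omega : d - 1 - k < d)]
        have hexp : d - 1 - (d - 1 - k) = k := by omega
        rw [hexp]
      rw [h16] at h13
      exact h13
  have hUA : ∀ z, z ∈ Submodule.span ℝ (Set.range (fun t : Fin d => w ↑t)) →
      z ᵥ* A ∈ Submodule.span ℝ (Set.range (fun t : Fin d => w ↑t)) := by
    intro z hz
    induction hz using Submodule.span_induction with
    | mem y hy =>
        obtain ⟨t, rfl⟩ := hy
        have h17 : w ↑t ᵥ* A = w (↑t + 1) := by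
          rw [hwdef]
          show (xi ᵥ* A ^ (↑t : ℕ)) ᵥ* A = xi ᵥ* A ^ ((↑t : ℕ) + 1)
          rw [Matrix.vecMul_vecMul, ← pow_succ]
        rw [h17]
        rcases Nat.lt_or_ge ((↑t : ℕ) + 1) d with h | h
        · exact Submodule.subset_span ⟨⟨(↑t : ℕ) + 1, h⟩, rfl⟩
        · have h18 : w ((↑t : ℕ) + 1) = w d := by
            have := t.isLt
            have h18' : (↑t : ℕ) + 1 = d := by omega
            rw [h18']
          rw [h18]
          exact hdP
    | zero =>
        rw [Matrix.zero_vecMul]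
        exact Submodule.zero_mem _
    | add a b ha hb iha ihb =>
        rw [Matrix.add_vecMul]
        exact Submodule.add_mem _ iha ihb
    | smul r a ha iha =>
        rw [Matrix.smul_vecMul]
        exact Submodule.smul_mem _ _ iha
  have hUall : ∀ k, w k ∈ Submodule.span ℝ (Set.range (fun t : Fin d => w ↑t)) := by
    intro k
    induction k with
    | zero =>
        rcases Nat.eq_zero_or_pos d with h | h
        · have h19 : w 0 = w d := by rw [h]
          rw [h19]
          exact hdP
        · exact Submodule.subset_span ⟨⟨0, h⟩, rfl⟩
    | succ k ihk =>
        have h19 : w (k + 1) = w k ᵥ* A := by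
          rw [hwdef]
          show xi ᵥ* A ^ (k + 1) = (xi ᵥ* A ^ k) ᵥ* A
          rw [Matrix.vecMul_vecMul, ← pow_succ]
        rw [h19]
        exact hUA _ ihk
  have hUB : ∀ z, z ∈ Submodule.span ℝ (Set.range (fun t : Fin d => w ↑t)) →
      z ᵥ* B = 0 := by
    intro z hz
    induction hz using Submodule.span_induction with
    | mem y hy =>
        obtain ⟨t, rfl⟩ := hy
        show w ↑t ᵥ* B = 0
        rw [hwdef]
        show (xi ᵥ* A ^ (↑t : ℕ)) ᵥ* B = 0
        rw [Matrix.vecMul_vecMul]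
        exact hBz ↑t t.isLt
    | zero => rw [Matrix.zero_vecMul]
    | add a b ha hb iha ihb => rw [Matrix.add_vecMul, iha, ihb, add_zero]
    | smul r a ha iha => rw [Matrix.smul_vecMul, iha, smul_zero]
  have hxiB : ∀ k, xi ᵥ* (A ^ k * B) = 0 := by
    intro k
    rw [← Matrix.vecMul_vecMul]
    exact hUB _ (hUall k)
  have hxi0 : xi = 0 := by
    apply vecMul_eq_zero_of_rank _ (by simpa using hctrb)
    funext jc
    exact congrFun (hxiB ↑jc.1) jc.2
  funext r
  cases r with
  | inl i => exact congrFun hxi0 i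
  | inr q =>
      have h2 := congrFun (heta0 ↑q.1) q.2
      rw [heta] at h2
      simpa [q.1.isLt] using h2

lemma mulVec_smul_sum {ι : Type*} [Fintype ι] {n1 n2 : ℕ}
    (M : Matrix (Fin n2) (Fin n1) ℝ) (g : ι → ℝ) (f : ι → Fin n1 → ℝ) :
    M *ᵥ (∑ j : ι, g j • f j) = ∑ j : ι, g j • (M *ᵥ f j) := by
  rw [mulVec_sum']
  exact Finset.sum_congr rfl (fun j _ => Matrix.mulVec_smul M (g j) (f j))

/-- Fundamental Lemma, rank form: if `x_{k+1} = A x_k + B u_k` is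
controllable and `u` is persistently exciting of order `L + n`, then the matrix
`col(X, H_L(u))` with `X = [x_0, …, x_{T-L}]` has full row rank `n + m * L`;
consequently the range of `col(H_L(u), H_L(y))` is exactly the set of `L`-long
input-output trajectories of the system. -/
theorem fundamental_lemma_rank (n m p T L : ℕ) (hL : 1 ≤ L) (hT : L + n ≤ T)
    (A : Matrix (Fin n) (Fin n) ℝ) (B : Matrix (Fin n) (Fin m) ℝ)
    (C : Matrix (Fin p) (Fin n) ℝ) (D : Matrix (Fin p) (Fin m) ℝ)
    (hctrb : (Matrix.of (fun (i : Fin n) (jc : Fin n × Fin m) =>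
        (A ^ (jc.1 : ℕ) * B) i jc.2)).rank = n)
    (x : ℕ → Fin n → ℝ) (u : ℕ → Fin m → ℝ) (y : ℕ → Fin p → ℝ)
    (hx : ∀ k, x (k + 1) = A.mulVec (x k) + B.mulVec (u k))
    (hy : ∀ k, y k = C.mulVec (x k) + D.mulVec (u k))
    (hPE : (blockHankel m T (L + n) u).rank = m * (L + n)) :
    (Matrix.of (fun (r : Fin n ⊕ Fin L × Fin m) (j : Fin (T - L + 1)) =>
        Sum.elim (fun s => x j.1 s) (fun km => u (km.1.1 + j.1) km.2) r)).rank
      = n + m * L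
    ∧ ∀ (ub : Fin L → Fin m → ℝ) (yb : Fin L → Fin p → ℝ),
        ((∃ g : Fin (T - L + 1) → ℝ,
            (∀ i : Fin L, ∀ a, (blockHankel m T L u).mulVec g (i, a) = ub i a)
            ∧ (∀ i : Fin L, ∀ a, (blockHankel p T L y).mulVec g (i, a) = yb i a))
          ↔ ∃ xs : ℕ → Fin n → ℝ,
              ∀ i : Fin L,
                xs (i + 1) = A.mulVec (xs i) + B.mulVec (ub i)
                ∧ yb i = C.mulVec (xs i) + D.mulVec (ub i)) := by
  classical
  have hker : ∀ v : (Fin n ⊕ Fin L × Fin m) → ℝ,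
      v ᵥ* (Matrix.of (fun (r : Fin n ⊕ Fin L × Fin m) (j : Fin (T - L + 1)) =>
        Sum.elim (fun s => x j.1 s) (fun km => u (km.1.1 + j.1) km.2) r)) = 0 → v = 0 :=
    fun v hv => kernel_trivial n m T L hL hT A B hctrb x u hx hPE v hv
  have hrank := rank_eq_card_of_ker _ hker
  constructor
  · rw [hrank]
    simp only [Fintype.card_sum, Fintype.card_prod, Fintype.card_fin]
    ring
  intro ub yb
  constructor
  · -- forward: image of Hankel maps is a trajectory
    rintro ⟨g, hgu, hgy⟩
    refine ⟨fun k => ∑ j : Fin (T - L + 1), g j • x (k + ↑j), ?_⟩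
    intro i
    have hub : ub i = ∑ j : Fin (T - L + 1), g j • u ((i : ℕ) + (j : ℕ)) := by
      funext a
      rw [← hgu i a]
      simp only [Matrix.mulVec, dotProduct, blockHankel, Finset.sum_apply,
        Pi.smul_apply, smul_eq_mul]
      exact Finset.sum_congr rfl (fun jj _ => by ring)
    constructor
    · calc (∑ j : Fin (T - L + 1), g j • x ((i : ℕ) + 1 + (j : ℕ)))
          = ∑ j : Fin (T - L + 1),
              (g j • (A *ᵥ x ((i : ℕ) + (j : ℕ))) + g j • (B *ᵥ u ((i : ℕ) + (j : ℕ)))) := by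
            apply Finset.sum_congr rfl
            intro jj _
            have harg : (i : ℕ) + 1 + (jj : ℕ) = ((i : ℕ) + (jj : ℕ)) + 1 := by omega
            rw [harg, hx, smul_add]
        _ = A *ᵥ (∑ j : Fin (T - L + 1), g j • x ((i : ℕ) + (j : ℕ))) + B *ᵥ ub i := by
            rw [Finset.sum_add_distrib, hub, mulVec_smul_sum, mulVec_smul_sum]
    · calc yb i = ∑ j : Fin (T - L + 1), g j • y ((i : ℕ) + (j : ℕ)) := by
            funext a
            rw [← hgy i a]
            simp only [Matrix.mulVec, dotProduct, blockHankel, Finset.sum_apply,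
              Pi.smul_apply, smul_eq_mul]
            exact Finset.sum_congr rfl (fun jj _ => by ring)
        _ = ∑ j : Fin (T - L + 1),
              (g j • (C *ᵥ x ((i : ℕ) + (j : ℕ))) + g j • (D *ᵥ u ((i : ℕ) + (j : ℕ)))) := by
            apply Finset.sum_congr rfl
            intro jj _
            rw [hy, smul_add]
        _ = C *ᵥ (∑ j : Fin (T - L + 1), g j • x ((i : ℕ) + (j : ℕ))) + D *ᵥ ub i := by
            rw [Finset.sum_add_distrib, hub, mulVec_smul_sum, mulVec_smul_sum]
  · -- backward: every trajectory is in the image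
    rintro ⟨xs, hxs⟩
    obtain ⟨g, hg⟩ := exists_mulVec_eq_of_rank _ hrank
      (Sum.elim (fun s => xs 0 s) (fun km => ub km.1 km.2))
    have hgu : ∀ (i : Fin L) (a : Fin m),
        (blockHankel m T L u).mulVec g (i, a) = ub i a :=
      fun i a => congrFun hg (Sum.inr (i, a))
    have hubg : ∀ i : Fin L, ub i = ∑ j : Fin (T - L + 1), g j • u ((i : ℕ) + (j : ℕ)) := by
      intro i
      funext a
      rw [← hgu i a]
      simp only [Matrix.mulVec, dotProduct, blockHankel, Finset.sum_apply,
        Pi.smul_apply, smul_eq_mul]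
      exact Finset.sum_congr rfl (fun jj _ => by ring)
    have hmatch : ∀ k, k ≤ L →
        (∑ j : Fin (T - L + 1), g j • x (k + ↑j)) = xs k := by
      intro k
      induction k with
      | zero =>
          intro _
          funext s
          have h0 := congrFun hg (Sum.inl s)
          simp only [Sum.elim_inl] at h0
          simp only [Finset.sum_apply, Pi.smul_apply, smul_eq_mul]
          rw [← h0]
          simp only [Matrix.mulVec, dotProduct]
          apply Finset.sum_congr rfl
          intro jj _
          have : (0 : ℕ) + ↑jj = ↑jj := by omega
          rw [this]
          simp only [Matrix.of_apply, Sum.elim_inl]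
          ring
      | succ k ihk =>
          intro hk1
          have hkL : k < L := by omega
          set i : Fin L := ⟨k, hkL⟩ with hi
          have hstep := (hxs i).1
          have hxt : (∑ j : Fin (T - L + 1), g j • x (k + 1 + ↑j))
              = A *ᵥ (∑ j : Fin (T - L + 1), g j • x (k + ↑j)) + B *ᵥ ub i := by
            calc (∑ j : Fin (T - L + 1), g j • x (k + 1 + ↑j))
                = ∑ j : Fin (T - L + 1),
                    (g j • (A *ᵥ x (k + ↑j)) + g j • (B *ᵥ u (k + ↑j))) := by
                  apply Finset.sum_congr rfl
                  intro jj _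
                  have harg : k + 1 + ↑jj = (k + ↑jj) + 1 := by omega
                  rw [harg, hx, smul_add]
              _ = A *ᵥ (∑ j : Fin (T - L + 1), g j • x (k + ↑j)) + B *ᵥ ub i := by
                  rw [Finset.sum_add_distrib, hubg i, mulVec_smul_sum, mulVec_smul_sum]
          rw [hxt, ihk (by omega), ← hstep]
    refine ⟨g, hgu, ?_⟩
    intro i a
    have hyi := (hxs i).2
    have hLHS : (blockHankel p T L y).mulVec g (i, a)
        = (C *ᵥ (∑ j : Fin (T - L + 1), g j • x ((i : ℕ) + (j : ℕ))) + D *ᵥ ub i) a := by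
      have : (blockHankel p T L y).mulVec g (i, a)
          = (∑ j : Fin (T - L + 1), g j • y ((i : ℕ) + (j : ℕ))) a := by
        simp only [Matrix.mulVec, dotProduct, blockHankel, Finset.sum_apply,
          Pi.smul_apply, smul_eq_mul]
        exact Finset.sum_congr rfl (fun jj _ => by ring)
      rw [this]
      have h2 : (∑ j : Fin (T - L + 1), g j • y ((i : ℕ) + (j : ℕ)))
          = C *ᵥ (∑ j : Fin (T - L + 1), g j • x ((i : ℕ) + (j : ℕ))) + D *ᵥ ub i := by
        calc (∑ j : Fin (T - L + 1), g j • y ((i : ℕ) + (j : ℕ)))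
            = ∑ j : Fin (T - L + 1),
                (g j • (C *ᵥ x ((i : ℕ) + (j : ℕ))) + g j • (D *ᵥ u ((i : ℕ) + (j : ℕ)))) := by
              apply Finset.sum_congr rfl
              intro jj _
              rw [hy, smul_add]
          _ = C *ᵥ (∑ j : Fin (T - L + 1), g j • x ((i : ℕ) + (j : ℕ))) + D *ᵥ ub i := by
              rw [Finset.sum_add_distrib, hubg i, mulVec_smul_sum, mulVec_smul_sum]
      rw [h2]
    rw [hLHS, hmatch ↑i (le_of_lt i.isLt), ← hyi]
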